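/- Let G be a plane graph that contains neither K4 nor C5 as a subgraph, with minimum degree δ(G) ≥ 3 and at least 5 vertices. Then every triangular block B of G satisfies 15·f(B) − 8·e(B) ≤ 0, where e(B) is the number of edges of B and f(B) = Σ_{e∈B} f(e) with f(e) = 1/l1 + 1/l2, l1 and l2 being the lengths of the (at most two) faces of G incident to e (with l1 = l2 the length of the unique incident face when e is a bridge). -/

import Mathlib

open SimpleGraph

namespace PlanarTuran

/-- Reversal of darts, as a permutation of the darts of `G`. -/
def dartRev {V : Type*} (G : SimpleGraph V) : Equiv.Perm G.Dart where
  toFun := Dart.symm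
  invFun := Dart.symm
  left_inv d := Dart.symm_symm d
  right_inv d := Dart.symm_symm d

/-- A rotation system (combinatorial embedding) of a simple graph `G`: a permutation of the
darts which fixes the initial vertex of every dart and is a single cycle on the darts leaving
each given vertex. -/
structure RotationSystem {V : Type*} (G : SimpleGraph V) where
  rot : Equiv.Perm G.Dart
  rot_fst : ∀ d : G.Dart, (rot d).fst = d.fst
  rot_cycle : ∀ d d' : G.Dart, d.fst = d'.fst → rot.SameCycle d d'

namespace RotationSystem

variable {V : Type*} {G : SimpleGraph V}

/-- The face permutation of the embedding: its orbits are the faces of the plane graph. -/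
def facePerm (R : RotationSystem G) : Equiv.Perm G.Dart :=
  (dartRev G).trans R.rot

/-- The face containing (the side of) a dart, encoded as the set of darts on its boundary walk. -/
def faceOf (R : RotationSystem G) (d : G.Dart) : Set G.Dart :=
  {d' | R.facePerm.SameCycle d d'}

/-- The length of the face incident to the dart `d`: the number of edge-sides on its
boundary walk (a bridge is counted twice). -/
noncomputable def faceLen (R : RotationSystem G) (d : G.Dart) : ℕ :=
  (R.faceOf d).ncard

/-- Darts lying on the same face. -/
def faceSetoid (R : RotationSystem G) : Setoid G.Dart :=
  ⟨R.facePerm.SameCycle,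
   ⟨fun d => Equiv.Perm.SameCycle.refl _ d, fun h => h.symm, fun h h' => h.trans h'⟩⟩

/-- The number of faces of the embedded graph (only counting faces having at least one edge on
their boundary). -/
noncomputable def numFaces (R : RotationSystem G) : ℕ :=
  Nat.card (Quotient R.faceSetoid)

/-- Darts on the same face, within the connected component `C`. -/
def faceSetoidIn (R : RotationSystem G) (C : G.ConnectedComponent) :
    Setoid {d : G.Dart // G.connectedComponentMk d.fst = C} :=
  ⟨fun d d' => R.facePerm.SameCycle d.1 d'.1,
   ⟨fun d => Equiv.Perm.SameCycle.refl _ _, fun h => h.symm, fun h h' => h.trans h'⟩⟩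

/-- The rotation system is a *plane* (genus zero) embedding: every connected component
containing at least one edge satisfies Euler's formula `n - e + f = 2`
(written here as `2*n + 2*f = 2*e + 4`, where `2*e` is the number of darts). -/
def GenusZero (R : RotationSystem G) : Prop :=
  ∀ C : G.ConnectedComponent, (∃ d : G.Dart, G.connectedComponentMk d.fst = C) →
    2 * Nat.card {v : V // G.connectedComponentMk v = C}
      + 2 * Nat.card (Quotient (R.faceSetoidIn C))
      = Nat.card {d : G.Dart // G.connectedComponentMk d.fst = C} + 4

/-- The contribution `f(e) = 1/l₁ + 1/l₂` of an edge `e` to the face number, where `l₁, l₂`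
are the lengths of the faces incident to the two darts of `e` (for a bridge both darts lie
on the same face, giving `f(e) = 2/l`). -/
noncomputable def fEdge [Fintype V] [DecidableEq V] [DecidableRel G.Adj]
    (R : RotationSystem G) (e : Sym2 V) : ℚ :=
  ∑ d ∈ Finset.univ.filter (fun d : G.Dart => d.edge = e), (1 : ℚ) / (R.faceLen d)

/-- The edges `e₁` and `e₂` both lie on a common `3`-face. -/
def shares3Face (R : RotationSystem G) (e₁ e₂ : Sym2 V) : Prop :=
  ∃ d₁ d₂ : G.Dart, d₁.edge = e₁ ∧ d₂.edge = e₂ ∧ R.faceLen d₁ = 3 ∧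
    R.facePerm.SameCycle d₁ d₂

/-- The triangular block generated by an edge `e`: the closure of `{e}` under adding all
edges of any `3`-face containing an edge already present. -/
def triBlockOf (R : RotationSystem G) (e : Sym2 V) : Set (Sym2 V) :=
  {e' | Relation.ReflTransGen R.shares3Face e e'}

/-- `B` is a triangular block of the plane graph `G`. -/
def IsTriangularBlock (R : RotationSystem G) (B : Set (Sym2 V)) : Prop :=
  ∃ e ∈ G.edgeSet, B = R.triBlockOf e

end RotationSystem

/-- A graph is planar iff it admits a genus-zero rotation system. -/
def _root_.SimpleGraph.IsPlanar {V : Type*} (G : SimpleGraph V) : Prop :=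
  ∃ R : RotationSystem G, R.GenusZero

/-- `G` contains no cycle of length `k`; equivalently, no subgraph isomorphic to `C_k`. -/
def _root_.SimpleGraph.CycleFree {V : Type*} (G : SimpleGraph V) (k : ℕ) : Prop :=
  ∀ ⦃v : V⦄ (w : G.Walk v v), w.IsCycle → w.length ≠ k

/-- A graph is 2-connected if it has at least 3 vertices and deleting any single vertex
leaves it connected. -/
def _root_.SimpleGraph.IsTwoConnected {V : Type*} (G : SimpleGraph V) : Prop :=
  3 ≤ Nat.card V ∧ ∀ v : V, (G.induce {u | u ≠ v}).Connected

/-- The set of vertices covered by a set `B` of edges. -/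
def blockVerts {V : Type*} (B : Set (Sym2 V)) : Set V :=
  {v | ∃ e ∈ B, v ∈ e}

/-- An edge set forming a single edge `K₂`. -/
def IsK2Block {V : Type*} (B : Set (Sym2 V)) : Prop :=
  ∃ u v : V, u ≠ v ∧ B = {s(u, v)}

/-- An edge set forming a triangle `K₃`. -/
def IsK3Block {V : Type*} (B : Set (Sym2 V)) : Prop :=
  ∃ u v w : V, u ≠ v ∧ u ≠ w ∧ v ≠ w ∧ B = {s(u, v), s(v, w), s(u, w)}

/-- An edge set forming `B₄`, two triangles `u v w` and `v w x` sharing the edge `v w`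
(`K₄` minus an edge). -/
def IsB4Block {V : Type*} (B : Set (Sym2 V)) : Prop :=
  ∃ u v w x : V, u ≠ v ∧ u ≠ w ∧ u ≠ x ∧ v ≠ w ∧ v ≠ x ∧ w ≠ x ∧
    B = {s(u, v), s(u, w), s(v, w), s(v, x), s(w, x)}

/-- An edge set forming `B₅ₐ`: a path `x₁x₂x₃x₄` plus an apex `y` joined to all of
`x₁, x₂, x₃, x₄`. -/
def IsB5aBlock {V : Type*} (B : Set (Sym2 V)) : Prop :=
  ∃ y x₁ x₂ x₃ x₄ : V, y ≠ x₁ ∧ y ≠ x₂ ∧ y ≠ x₃ ∧ y ≠ x₄ ∧ x₁ ≠ x₂ ∧ x₁ ≠ x₃ ∧ x₁ ≠ x₄ ∧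
    x₂ ≠ x₃ ∧ x₂ ≠ x₄ ∧ x₃ ≠ x₄ ∧
    B = {s(y, x₁), s(y, x₂), s(y, x₃), s(y, x₄), s(x₁, x₂), s(x₂, x₃), s(x₃, x₄)}

/-- An edge set forming `B₅ᵦ`, the wheel `W₄`: a `4`-cycle `x₁x₂x₃x₄` plus a center `c`
joined to all four cycle vertices. -/
def IsB5bBlock {V : Type*} (B : Set (Sym2 V)) : Prop :=
  ∃ c x₁ x₂ x₃ x₄ : V, c ≠ x₁ ∧ c ≠ x₂ ∧ c ≠ x₃ ∧ c ≠ x₄ ∧ x₁ ≠ x₂ ∧ x₁ ≠ x₃ ∧ x₁ ≠ x₄ ∧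
    x₂ ≠ x₃ ∧ x₂ ≠ x₄ ∧ x₃ ≠ x₄ ∧
    B = {s(c, x₁), s(c, x₂), s(c, x₃), s(c, x₄), s(x₁, x₂), s(x₂, x₃), s(x₃, x₄), s(x₄, x₁)}

end PlanarTuran

open PlanarTuran

namespace PlanarTuran
namespace RotationSystem

open Function Equiv

set_option linter.unusedSectionVars false
set_option linter.unusedVariables false

variable {V : Type*} [Fintype V] [DecidableEq V] {G : SimpleGraph V} [DecidableRel G.Adj]
variable (R : RotationSystem G)

lemma facePerm_apply (d : G.Dart) : R.facePerm d = R.rot d.symm := rfl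

@[simp] lemma symm_fst (d : G.Dart) : d.symm.fst = d.snd := rfl
@[simp] lemma symm_snd (d : G.Dart) : d.symm.snd = d.fst := rfl

lemma facePerm_fst (d : G.Dart) : (R.facePerm d).fst = d.snd := by
  rw [facePerm_apply, R.rot_fst]; rfl

lemma facePerm_ne (d : G.Dart) : R.facePerm d ≠ d := by
  intro h
  have := R.facePerm_fst d
  rw [h] at this
  exact d.fst_ne_snd this

lemma mem_periodic (d : G.Dart) : d ∈ Function.periodicPts ⇑R.facePerm := by
  refine ⟨orderOf R.facePerm, orderOf_pos _, ?_⟩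
  show (⇑R.facePerm)^[orderOf R.facePerm] d = d
  rw [Equiv.Perm.iterate_eq_pow, pow_orderOf_eq_one]; rfl

lemma sameCycle_iff (d d' : G.Dart) :
    R.facePerm.SameCycle d d' ↔ ∃ n : ℕ, (R.facePerm ^ n) d = d' := by
  constructor
  · intro h
    obtain ⟨i, _, hi⟩ := h.exists_pow_eq'
    exact ⟨i, hi⟩
  · rintro ⟨n, rfl⟩
    exact ⟨n, by simp⟩

lemma faceOf_eq_image (d : G.Dart) :
    R.faceOf d =
      ↑((Finset.range (Function.minimalPeriod ⇑R.facePerm d)).image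
        fun n => (R.facePerm ^ n) d) := by
  ext d'
  simp only [faceOf, Set.mem_setOf_eq, Finset.coe_image, Set.mem_image, Finset.mem_coe,
    Finset.mem_range]
  rw [R.sameCycle_iff]
  constructor
  · rintro ⟨n, rfl⟩
    refine ⟨n % Function.minimalPeriod ⇑R.facePerm d, ?_, ?_⟩
    · exact Nat.mod_lt _ (Function.minimalPeriod_pos_of_mem_periodicPts (R.mem_periodic d))
    · show (⇑R.facePerm)^[_] d = (⇑(R.facePerm ^ n)) d
      rw [Function.iterate_mod_minimalPeriod_eq, Equiv.Perm.iterate_eq_pow]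
  · rintro ⟨n, _, rfl⟩
    exact ⟨n, rfl⟩

lemma faceLen_eq_minimalPeriod (d : G.Dart) :
    R.faceLen d = Function.minimalPeriod ⇑R.facePerm d := by
  rw [faceLen, R.faceOf_eq_image, Set.ncard_coe_finset]
  rw [Finset.card_image_of_injOn, Finset.card_range]
  intro m hm n hn h
  simp only [Finset.mem_coe, Finset.mem_range] at hm hn
  exact Function.iterate_injOn_Iio_minimalPeriod hm hn (by simp only [Equiv.Perm.iterate_eq_pow]; exact h)

lemma facePerm_pow_faceLen (d : G.Dart) : (R.facePerm ^ R.faceLen d) d = d := by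
  rw [R.faceLen_eq_minimalPeriod]
  have := Function.iterate_minimalPeriod (f := ⇑R.facePerm) (x := d)
  rw [Equiv.Perm.iterate_eq_pow] at this
  exact this

lemma facePerm_pow_inj {d : G.Dart} {m n : ℕ} (hm : m < R.faceLen d) (hn : n < R.faceLen d)
    (h : (R.facePerm ^ m) d = (R.facePerm ^ n) d) : m = n := by
  rw [R.faceLen_eq_minimalPeriod] at hm hn
  exact Function.iterate_injOn_Iio_minimalPeriod hm hn (by simp only [Equiv.Perm.iterate_eq_pow]; exact h)

lemma mem_faceOf_iff {d d' : G.Dart} :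
    d' ∈ R.faceOf d ↔ ∃ n < R.faceLen d, (R.facePerm ^ n) d = d' := by
  rw [R.faceOf_eq_image, R.faceLen_eq_minimalPeriod]
  simp only [Finset.coe_image, Set.mem_image, Finset.mem_coe, Finset.mem_range]

lemma faceOf_congr {d d' : G.Dart} (h : R.facePerm.SameCycle d d') :
    R.faceOf d = R.faceOf d' := by
  ext x
  exact ⟨fun hx => (h.symm.trans hx : _), fun hx => (h.trans hx : _)⟩

lemma faceLen_congr {d d' : G.Dart} (h : R.facePerm.SameCycle d d') :
    R.faceLen d = R.faceLen d' := by
  rw [faceLen, faceLen, R.faceOf_congr h]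

lemma sameCycle_facePerm (d : G.Dart) : R.facePerm.SameCycle d (R.facePerm d) := ⟨1, by simp⟩

end RotationSystem
end PlanarTuran
namespace PlanarTuran

variable {V : Type*} [Fintype V] [DecidableEq V] {G : SimpleGraph V} [DecidableRel G.Adj]

set_option linter.unusedSectionVars false

lemma mem_of_sameCycle_of_invariant {α : Type*} [Finite α] (σ : Equiv.Perm α) {S : Set α}
    (hS : ∀ x ∈ S, σ x ∈ S) {x y : α} (hx : x ∈ S) (h : σ.SameCycle x y) : y ∈ S := by
  have key : ∀ n : ℕ, (σ ^ n) x ∈ S := by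
    intro n
    induction n with
    | zero => simpa using hx
    | succ n ih => rw [pow_succ']; exact hS _ ih
  obtain ⟨i, _, rfl⟩ := h.exists_pow_eq'
  exact key i

lemma no_k4 (hK4 : G.CliqueFree 4) {a b c d : V} (hab : G.Adj a b) (hac : G.Adj a c)
    (had : G.Adj a d) (hbc : G.Adj b c) (hbd : G.Adj b d) (hcd : G.Adj c d) : False := by
  apply hK4 {a, b, c, d}
  rw [SimpleGraph.isNClique_iff]
  constructor
  · intro x hx y hy hxy
    simp only [Finset.coe_insert, Set.mem_insert_iff, Finset.coe_singleton,
      Set.mem_singleton_iff] at hx hy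
    rcases hx with rfl|rfl|rfl|rfl <;> rcases hy with rfl|rfl|rfl|rfl <;>
      first
        | exact absurd rfl hxy
        | assumption
        | exact hab.symm
        | exact hac.symm
        | exact had.symm
        | exact hbc.symm
        | exact hbd.symm
        | exact hcd.symm
  · have h1 : a ≠ b := hab.ne
    have h2 : a ≠ c := hac.ne
    have h3 : a ≠ d := had.ne
    have h4 : b ≠ c := hbc.ne
    have h5 : b ≠ d := hbd.ne
    have h6 : c ≠ d := hcd.ne
    rw [Finset.card_insert_of_notMem (by simp [h1, h2, h3]),
      Finset.card_insert_of_notMem (by simp [h4, h5]),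
      Finset.card_insert_of_notMem (by simp [h6]), Finset.card_singleton]

lemma no_c5 (hC5 : G.CycleFree 5) {a b c d e : V}
    (hab : G.Adj a b) (hbc : G.Adj b c) (hcd : G.Adj c d) (hde : G.Adj d e)
    (hea : G.Adj e a)
    (hac : a ≠ c) (had : a ≠ d) (hbd : b ≠ d) (hbe : b ≠ e) (hce : c ≠ e) : False := by
  refine hC5 (SimpleGraph.Walk.cons hab (.cons hbc (.cons hcd (.cons hde (.cons hea .nil)))))
    ?_ (by simp)
  have h1 : a ≠ b := hab.ne
  have h2 : b ≠ c := hbc.ne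
  have h3 : c ≠ d := hcd.ne
  have h4 : d ≠ e := hde.ne
  have h5 : e ≠ a := hea.ne
  have h1' := h1.symm; have h2' := h2.symm; have h3' := h3.symm
  have h4' := h4.symm; have h5' := h5.symm
  have hac' := hac.symm; have had' := had.symm; have hbd' := hbd.symm
  have hbe' := hbe.symm; have hce' := hce.symm
  rw [SimpleGraph.Walk.isCycle_def, SimpleGraph.Walk.isTrail_def]
  refine ⟨?_, by simp, ?_⟩
  · simp only [SimpleGraph.Walk.edges_cons, SimpleGraph.Walk.edges_nil, List.nodup_cons,
      List.mem_cons, List.not_mem_nil, or_false, List.nodup_nil, and_true, Sym2.eq_iff]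
    push_neg
    tauto
  · simp only [SimpleGraph.Walk.support_cons, SimpleGraph.Walk.support_nil, List.tail_cons,
      List.nodup_cons, List.mem_cons, List.not_mem_nil, or_false, List.nodup_nil, and_true]
    push_neg
    tauto

lemma exists_adj_ne (hdeg : ∀ v : V, 3 ≤ G.degree v) (v a : V) :
    ∃ b : V, G.Adj v b ∧ b ≠ a := by
  obtain ⟨b, hb, hba⟩ := Finset.exists_mem_ne (s := G.neighborFinset v)
    (by rw [SimpleGraph.card_neighborFinset_eq_degree]; have := hdeg v; omega) a
  exact ⟨b, by simpa using hb, hba⟩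

lemma exists_adj_ne2 (hdeg : ∀ v : V, 3 ≤ G.degree v) (v a₁ a₂ : V) :
    ∃ b : V, G.Adj v b ∧ b ≠ a₁ ∧ b ≠ a₂ := by
  by_contra hcon
  push_neg at hcon
  have hsub : G.neighborFinset v ⊆ {a₁, a₂} := by
    intro x hx
    have hadj : G.Adj v x := by simpa using hx
    rcases eq_or_ne x a₁ with rfl|h1
    · simp
    · simp [hcon x hadj h1]
  have hle := Finset.card_le_card hsub
  have h2 : ({a₁, a₂} : Finset V).card ≤ 2 := Finset.card_insert_le _ _ |>.trans (by simp)
  have h3 := hdeg v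
  rw [← SimpleGraph.card_neighborFinset_eq_degree] at h3
  omega

namespace RotationSystem

variable (R : RotationSystem G)

lemma eq_of_rot_fixed {d0 d' : G.Dart} (h : R.rot d0 = d0) (hfst : d0.fst = d'.fst) :
    d' = d0 := by
  have hsc := R.rot_cycle d0 d' hfst
  have := mem_of_sameCycle_of_invariant R.rot (S := {d0}) (by intro x hx; simp_all) rfl hsc
  exact this

lemma facePerm_ne_symm (hdeg : ∀ v : V, 3 ≤ G.degree v) (d : G.Dart) :
    R.facePerm d ≠ d.symm := by
  intro h
  rw [facePerm_apply] at h
  obtain ⟨b, hb, hbne⟩ := exists_adj_ne (G := G) hdeg d.snd d.fst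
  have hdb : (⟨(d.snd, b), hb⟩ : G.Dart) = d.symm :=
    R.eq_of_rot_fixed h rfl
  apply hbne
  have : b = d.symm.snd := congrArg (fun x : G.Dart => x.snd) hdb
  exact this

lemma facePerm_sq_ne (hdeg : ∀ v : V, 3 ≤ G.degree v) (d : G.Dart) :
    R.facePerm (R.facePerm d) ≠ d := by
  intro h
  apply R.facePerm_ne_symm hdeg d
  have h1 : (R.facePerm d).fst = d.snd := R.facePerm_fst d
  have h2 : (R.facePerm d).snd = d.fst := by
    have := R.facePerm_fst (R.facePerm d)
    rw [h] at this
    exact this.symm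
  apply SimpleGraph.Dart.ext
  rw [Prod.ext_iff]
  exact ⟨h1, h2⟩

lemma three_le_faceLen (hdeg : ∀ v : V, 3 ≤ G.degree v) (d : G.Dart) :
    3 ≤ R.faceLen d := by
  have hfin : (R.faceOf d).Finite := by
    rw [R.faceOf_eq_image]; exact (Finset.finite_toSet _)
  have hsub : ({d, R.facePerm d, R.facePerm (R.facePerm d)} : Set G.Dart) ⊆ R.faceOf d := by
    intro x hx
    rcases hx with rfl|rfl|rfl
    · exact Equiv.Perm.SameCycle.refl _ _
    · exact ⟨1, by simp⟩
    · exact ⟨2, by rw [zpow_two]; rfl⟩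
  have h1 : R.facePerm d ≠ d := R.facePerm_ne d
  have h2 : R.facePerm (R.facePerm d) ≠ d := R.facePerm_sq_ne hdeg d
  have h3 : R.facePerm (R.facePerm d) ≠ R.facePerm d := fun h => h1 (R.facePerm.injective h)
  have hcard : ({d, R.facePerm d, R.facePerm (R.facePerm d)} : Set G.Dart).ncard = 3 := by
    rw [Set.ncard_insert_of_notMem (by simp [h1.symm, h2.symm]) (Set.toFinite _),
      Set.ncard_insert_of_notMem (by simp [h3.symm]) (Set.toFinite _), Set.ncard_singleton]
  calc 3 = _ := hcard.symm
    _ ≤ R.faceLen d := Set.ncard_le_ncard hsub hfin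

end RotationSystem
end PlanarTuran
namespace PlanarTuran
namespace RotationSystem

set_option linter.unusedSectionVars false
set_option maxHeartbeats 1000000

variable {V : Type*} [Fintype V] [DecidableEq V] {G : SimpleGraph V} [DecidableRel G.Adj]
variable (R : RotationSystem G)

lemma rot_two_cycle_absurd (hdeg : ∀ v : V, 3 ≤ G.degree v) {d1 d2 : G.Dart}
    (h12 : R.rot d1 = d2) (h21 : R.rot d2 = d1) (hfst : d1.fst = d2.fst) : False := by
  obtain ⟨b, hb, h1, h2⟩ := exists_adj_ne2 (G := G) hdeg d1.fst d1.snd d2.snd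
  have hdb : (⟨(d1.fst, b), hb⟩ : G.Dart) ∈ ({d1, d2} : Set G.Dart) := by
    refine mem_of_sameCycle_of_invariant R.rot (S := {d1, d2}) ?_ (by simp)
      (R.rot_cycle d1 _ rfl)
    rintro x (rfl|rfl) <;> simp [h12, h21]
  rcases hdb with h|h
  · exact h1 (congrArg (fun x : G.Dart => x.snd) h)
  · exact h2 (congrArg (fun x : G.Dart => x.snd) h)

lemma corner_absurd (hdeg : ∀ v : V, 3 ≤ G.degree v) {p x y : V}
    (hpx : G.Adj p x) (hpy : G.Adj p y)
    (h1 : R.facePerm ⟨(x, p), hpx.symm⟩ = ⟨(p, y), hpy⟩)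
    (h2 : R.facePerm ⟨(y, p), hpy.symm⟩ = ⟨(p, x), hpx⟩) : False := by
  rw [facePerm_apply] at h1 h2
  have e1 : (⟨(x, p), hpx.symm⟩ : G.Dart).symm = ⟨(p, x), hpx⟩ := by
    apply SimpleGraph.Dart.ext; rfl
  have e2 : (⟨(y, p), hpy.symm⟩ : G.Dart).symm = ⟨(p, y), hpy⟩ := by
    apply SimpleGraph.Dart.ext; rfl
  rw [e1] at h1
  rw [e2] at h2
  exact R.rot_two_cycle_absurd hdeg h2 h1 rfl

lemma triangle_structure (hdeg : ∀ v : V, 3 ≤ G.degree v) {d : G.Dart}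
    (h3 : R.faceLen d = 3) :
    ∃ (u v w : V) (huv : G.Adj u v) (hvw : G.Adj v w) (hwu : G.Adj w u),
      u ≠ v ∧ v ≠ w ∧ u ≠ w ∧
      d = ⟨(u, v), huv⟩ ∧
      R.facePerm d = ⟨(v, w), hvw⟩ ∧
      R.facePerm (R.facePerm d) = ⟨(w, u), hwu⟩ ∧
      R.facePerm (⟨(w, u), hwu⟩ : G.Dart) = d ∧
      R.faceOf d = {d, ⟨(v, w), hvw⟩, ⟨(w, u), hwu⟩} := by
  have hf3 : R.facePerm (R.facePerm (R.facePerm d)) = d := by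
    have h := R.facePerm_pow_faceLen d
    rw [h3] at h
    simpa [pow_succ, Equiv.Perm.mul_apply] using h
  set t2 := R.facePerm d with ht2
  set t3 := R.facePerm t2 with ht3
  have ht2f : t2.fst = d.snd := R.facePerm_fst d
  have ht3f : t3.fst = t2.snd := R.facePerm_fst t2
  have ht3s : t3.snd = d.fst := by
    have := R.facePerm_fst t3
    rw [hf3] at this
    exact this.symm
  have hvw : G.Adj d.snd t2.snd := ht2f ▸ t2.adj
  have hwu : G.Adj t2.snd d.fst := ht3f ▸ ht3s ▸ t3.adj
  have e2 : (⟨(d.snd, t2.snd), hvw⟩ : G.Dart) = t2 := by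
    apply SimpleGraph.Dart.ext
    rw [Prod.ext_iff]
    exact ⟨ht2f.symm, rfl⟩
  have e3 : (⟨(t2.snd, d.fst), hwu⟩ : G.Dart) = t3 := by
    apply SimpleGraph.Dart.ext
    rw [Prod.ext_iff]
    exact ⟨ht3f.symm, ht3s.symm⟩
  refine ⟨d.fst, d.snd, t2.snd, d.adj, hvw, hwu, d.fst_ne_snd, ht2f ▸ t2.fst_ne_snd, ?_,
    by apply SimpleGraph.Dart.ext; rfl, e2.symm, e3.symm, by rw [e3]; exact hf3, ?_⟩
  · intro h
    apply R.facePerm_ne_symm hdeg d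
    apply SimpleGraph.Dart.ext
    rw [Prod.ext_iff]
    exact ⟨ht2f, h.symm⟩
  · rw [e2, e3]
    ext x
    rw [R.mem_faceOf_iff, h3]
    constructor
    · rintro ⟨n, hn, rfl⟩
      interval_cases n
      · left; rfl
      · right; left; rw [pow_one]
      · right; right; rw [pow_two]; rfl
    · rintro (rfl|rfl|rfl)
      · exact ⟨0, by omega, by rw [pow_zero]; rfl⟩
      · exact ⟨1, by omega, by rw [pow_one]⟩
      · exact ⟨2, by omega, by rw [pow_two]; rfl⟩

lemma quad_structure (hdeg : ∀ v : V, 3 ≤ G.degree v) {d : G.Dart}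
    (h4 : R.faceLen d = 4) :
    ∃ (a b c e : V) (hab : G.Adj a b) (hbc : G.Adj b c) (hce : G.Adj c e)
      (hea : G.Adj e a),
      a ≠ b ∧ a ≠ c ∧ a ≠ e ∧ b ≠ c ∧ b ≠ e ∧ c ≠ e ∧
      d = ⟨(a, b), hab⟩ ∧
      R.facePerm d = ⟨(b, c), hbc⟩ ∧
      R.facePerm (R.facePerm d) = ⟨(c, e), hce⟩ ∧
      R.facePerm (R.facePerm (R.facePerm d)) = ⟨(e, a), hea⟩ := by
  have hf4 : R.facePerm (R.facePerm (R.facePerm (R.facePerm d))) = d := by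
    have h := R.facePerm_pow_faceLen d
    rw [h4] at h
    simpa [pow_succ, Equiv.Perm.mul_apply] using h
  set t2 := R.facePerm d with ht2
  set t3 := R.facePerm t2 with ht3
  set t4 := R.facePerm t3 with ht4
  have ht2f : t2.fst = d.snd := R.facePerm_fst d
  have ht3f : t3.fst = t2.snd := R.facePerm_fst t2
  have ht4f : t4.fst = t3.snd := R.facePerm_fst t3
  have ht4s : t4.snd = d.fst := by
    have := R.facePerm_fst t4
    rw [hf4] at this
    exact this.symm
  have hbc : G.Adj d.snd t2.snd := ht2f ▸ t2.adj
  have hce : G.Adj t2.snd t3.snd := ht3f ▸ t3.adj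
  have hea : G.Adj t3.snd d.fst := ht4f ▸ ht4s ▸ t4.adj
  refine ⟨d.fst, d.snd, t2.snd, t3.snd, d.adj, hbc, hce, hea,
    d.fst_ne_snd, ?_, ?_, ht2f ▸ t2.fst_ne_snd, ?_, ht3f ▸ t3.fst_ne_snd,
    by apply SimpleGraph.Dart.ext; rfl, ?_, ?_, ?_⟩
  · -- a ≠ c
    intro h
    apply R.facePerm_ne_symm hdeg d
    apply SimpleGraph.Dart.ext
    rw [Prod.ext_iff]
    exact ⟨ht2f, h.symm⟩
  · -- a ≠ e : else t4 is a loop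
    intro h
    apply t4.fst_ne_snd
    rw [ht4f, ht4s, h]
  · -- b ≠ e : else t3 = t2.symm
    intro h
    apply R.facePerm_ne_symm hdeg t2
    apply SimpleGraph.Dart.ext
    rw [Prod.ext_iff]
    exact ⟨ht3f, (ht2f.trans h).symm⟩
  · apply SimpleGraph.Dart.ext
    rw [Prod.ext_iff]
    exact ⟨ht2f, rfl⟩
  · apply SimpleGraph.Dart.ext
    rw [Prod.ext_iff]
    exact ⟨ht3f, rfl⟩
  · apply SimpleGraph.Dart.ext
    rw [Prod.ext_iff]
    exact ⟨ht4f, ht4s⟩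

end RotationSystem
end PlanarTuran
namespace PlanarTuran
namespace RotationSystem

set_option linter.unusedSectionVars false
set_option maxHeartbeats 1000000

variable {V : Type*} [Fintype V] [DecidableEq V] {G : SimpleGraph V} [DecidableRel G.Adj]
variable (R : RotationSystem G)

lemma faceLen_ne_five (hdeg : ∀ v : V, 3 ≤ G.degree v) (hC5 : G.CycleFree 5) (d : G.Dart) :
    R.faceLen d ≠ 5 := by
  intro h5
  have hf5 : R.facePerm (R.facePerm (R.facePerm (R.facePerm (R.facePerm d)))) = d := by
    have h := R.facePerm_pow_faceLen d
    rw [h5] at h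
    simpa [pow_succ, Equiv.Perm.mul_apply] using h
  set t2 := R.facePerm d with ht2
  set t3 := R.facePerm t2 with ht3
  set t4 := R.facePerm t3 with ht4
  set t5 := R.facePerm t4 with ht5
  have ht2f : t2.fst = d.snd := R.facePerm_fst d
  have ht3f : t3.fst = t2.snd := R.facePerm_fst t2
  have ht4f : t4.fst = t3.snd := R.facePerm_fst t3
  have ht5f : t5.fst = t4.snd := R.facePerm_fst t4
  have ht5s : t5.snd = d.fst := by
    have := R.facePerm_fst t5
    rw [hf5] at this
    exact this.symm
  have h01 : G.Adj d.fst d.snd := d.adj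
  have h12 : G.Adj d.snd t2.snd := ht2f ▸ t2.adj
  have h23 : G.Adj t2.snd t3.snd := ht3f ▸ t3.adj
  have h34 : G.Adj t3.snd t4.snd := ht4f ▸ t4.adj
  have h40 : G.Adj t4.snd d.fst := ht5f ▸ ht5s ▸ t5.adj
  have hac : d.fst ≠ t2.snd := by
    intro h
    apply R.facePerm_ne_symm hdeg d
    apply SimpleGraph.Dart.ext
    rw [Prod.ext_iff]
    exact ⟨ht2f, h.symm⟩
  have hbd : d.snd ≠ t3.snd := by
    intro h
    apply R.facePerm_ne_symm hdeg t2
    apply SimpleGraph.Dart.ext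
    rw [Prod.ext_iff]
    exact ⟨ht3f, (ht2f.trans h).symm⟩
  have hce : t2.snd ≠ t4.snd := by
    intro h
    apply R.facePerm_ne_symm hdeg t3
    apply SimpleGraph.Dart.ext
    rw [Prod.ext_iff]
    exact ⟨ht4f, (ht3f.trans h).symm⟩
  have had : d.fst ≠ t3.snd := by
    intro h
    apply R.facePerm_ne_symm hdeg t4
    apply SimpleGraph.Dart.ext
    rw [Prod.ext_iff]
    constructor
    · exact ht5f
    · show t5.snd = t4.fst
      rw [ht5s, h, ← ht4f]
  have hbe : d.snd ≠ t4.snd := by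
    intro h
    apply R.facePerm_ne_symm hdeg t5
    rw [hf5]
    apply SimpleGraph.Dart.ext
    rw [Prod.ext_iff]
    exact ⟨ht5s.symm, (ht5f.trans h.symm).symm⟩
  exact no_c5 hC5 h01 h12 h23 h34 h40 hac had hbd hbe hce

lemma no_three_four (hdeg : ∀ v : V, 3 ≤ G.degree v) (hC5 : G.CycleFree 5) {d : G.Dart}
    (h3 : R.faceLen d = 3) (h4 : R.faceLen d.symm = 4) : False := by
  obtain ⟨u, v, w, huv, hvw, hwu, hne_uv, hne_vw, hne_uw, hd, hfd, hffd, ht3back, hface⟩ :=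
    R.triangle_structure hdeg h3
  obtain ⟨a, b, c, e, hab, hbc, hce, hea, hab', hac', hae', hbc', hbe', hce', hds, hfds,
    hffds, hfffds⟩ := R.quad_structure hdeg h4
  have hdsymm : d.symm = ⟨(v, u), huv.symm⟩ := by
    rw [hd]; apply SimpleGraph.Dart.ext; rfl
  have hav : v = a := by
    have := congrArg (fun x : G.Dart => x.fst) (hdsymm.symm.trans hds)
    exact this
  have hbu : u = b := by
    have := congrArg (fun x : G.Dart => x.snd) (hdsymm.symm.trans hds)
    exact this
  subst hav
  subst hbu
  rcases eq_or_ne w c with rfl | hcw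
  · -- corner at u
    refine R.corner_absurd hdeg (p := u) (x := w) (y := v) hwu.symm huv ?_ ?_
    · have : R.facePerm ⟨(w, u), hwu⟩ = ⟨(u, v), huv⟩ := by rw [ht3back, hd]
      exact this
    · have : R.facePerm ⟨(v, u), huv.symm⟩ = ⟨(u, w), hbc⟩ := by rw [← hdsymm, hfds]
      exact this
  · rcases eq_or_ne w e with rfl | hew
    · -- corner at v
      refine R.corner_absurd hdeg (p := v) (x := u) (y := w) huv.symm hvw ?_ ?_
      · have : R.facePerm ⟨(u, v), huv⟩ = ⟨(v, w), hvw⟩ := by rw [← hd, hfd]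
        exact this
      · have hf4s : R.facePerm (R.facePerm (R.facePerm (R.facePerm d.symm))) = d.symm := by
          have h := R.facePerm_pow_faceLen d.symm
          rw [h4] at h
          simpa [pow_succ, Equiv.Perm.mul_apply] using h
        have : R.facePerm ⟨(w, v), hea⟩ = ⟨(v, u), huv.symm⟩ := by
          rw [← hfffds, hf4s, hdsymm]
        exact this
    · -- genuine 5-cycle w u c e v
      exact no_c5 hC5 hwu hbc hce hea hvw hcw hew hbe' hne_uv (Ne.symm hac')

lemma six_le_faceLen_symm (hdeg : ∀ v : V, 3 ≤ G.degree v) (hC5 : G.CycleFree 5) {d : G.Dart}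
    (h3 : R.faceLen d = 3) (hs : R.faceLen d.symm ≠ 3) : 6 ≤ R.faceLen d.symm := by
  have g3 := R.three_le_faceLen hdeg d.symm
  have g5 := R.faceLen_ne_five hdeg hC5 d.symm
  have g4 : R.faceLen d.symm ≠ 4 := fun h => R.no_three_four hdeg hC5 h3 h
  omega

end RotationSystem
end PlanarTuran
namespace PlanarTuran
namespace RotationSystem

set_option linter.unusedSectionVars false
set_option maxHeartbeats 1000000

variable {V : Type*} [Fintype V] [DecidableEq V] {G : SimpleGraph V} [DecidableRel G.Adj]
variable (R : RotationSystem G)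

lemma one_div_cast_le6 {n : ℕ} (h : 6 ≤ n) : (1 : ℚ) / (n : ℚ) ≤ 1 / 6 := by
  apply one_div_le_one_div_of_le
  · norm_num
  · exact_mod_cast h

lemma one_div_cast_le4 {n : ℕ} (h : 4 ≤ n) : (1 : ℚ) / (n : ℚ) ≤ 1 / 4 := by
  apply one_div_le_one_div_of_le
  · norm_num
  · exact_mod_cast h

lemma shares3Face_symm' {e1 e2 : Sym2 V} (h : R.shares3Face e1 e2) : R.shares3Face e2 e1 := by
  obtain ⟨d1, d2, h1, h2, hl, hsc⟩ := h
  exact ⟨d2, d1, h2, h1, by rw [← R.faceLen_congr hsc]; exact hl, hsc.symm⟩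

lemma triBlockOf_eq_of_shares {e1 e2 : Sym2 V} (h : R.shares3Face e1 e2) :
    R.triBlockOf e1 = R.triBlockOf e2 := by
  ext x
  constructor <;> intro hx
  · exact (Relation.ReflTransGen.single (R.shares3Face_symm' h)).trans hx
  · exact (Relation.ReflTransGen.single h).trans hx

lemma triBlock_subset {e : Sym2 V} {S : Set (Sym2 V)} (heS : e ∈ S)
    (hcl : ∀ a ∈ S, ∀ b, R.shares3Face a b → b ∈ S) : R.triBlockOf e ⊆ S := by
  intro x hx
  induction hx with
  | refl => exact heS
  | tail h1 h2 ih => exact hcl _ ih _ h2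

lemma dart_filter_eq {a b : V} (hab : G.Adj a b) :
    Finset.univ.filter (fun d : G.Dart => d.edge = s(a, b)) =
      {⟨(a, b), hab⟩, ⟨(b, a), hab.symm⟩} := by
  ext d
  simp [SimpleGraph.dart_edge_eq_mk'_iff, SimpleGraph.Dart.ext_iff]

lemma fEdge_eq {a b : V} (hab : G.Adj a b) :
    R.fEdge s(a, b) =
      1 / (R.faceLen ⟨(a, b), hab⟩ : ℚ) + 1 / (R.faceLen ⟨(b, a), hab.symm⟩ : ℚ) := by
  rw [fEdge, dart_filter_eq hab, Finset.sum_insert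
    (by simp [SimpleGraph.Dart.ext_iff, Prod.ext_iff, hab.ne]), Finset.sum_singleton]

lemma main_case_K2 (hdeg : ∀ v : V, 3 ≤ G.degree v) {d : G.Dart}
    (h1 : R.faceLen d ≠ 3) (h2 : R.faceLen d.symm ≠ 3) :
    15 * (∑ x ∈ (R.triBlockOf d.edge).toFinite.toFinset, R.fEdge x)
      - 8 * ((R.triBlockOf d.edge).ncard : ℚ) ≤ 0 := by
  have hB : R.triBlockOf d.edge = {d.edge} := by
    apply Set.Subset.antisymm
    · apply R.triBlock_subset (S := {d.edge}) rfl
      rintro a ha b ⟨d1, d2, hd1e, hd2e, hl1, hsc⟩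
      exfalso
      rw [Set.mem_singleton_iff] at ha
      subst ha
      rcases (SimpleGraph.dart_edge_eq_iff d1 d).1 hd1e with rfl | rfl
      · exact h1 hl1
      · exact h2 hl1
    · intro x hx
      rw [Set.mem_singleton_iff] at hx
      subst hx
      exact Relation.ReflTransGen.refl
  have hBF : (R.triBlockOf d.edge).toFinite.toFinset = ({d.edge} : Finset (Sym2 V)) := by
    ext x
    rw [Set.Finite.mem_toFinset, hB]
    simp
  have hcard : (R.triBlockOf d.edge).ncard = 1 := by rw [hB, Set.ncard_singleton]
  rw [hBF, hcard, Finset.sum_singleton]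
  have hde : d.edge = s(d.fst, d.snd) := rfl
  have hfe : R.fEdge d.edge =
      1 / (R.faceLen d : ℚ) + 1 / (R.faceLen d.symm : ℚ) := by
    rw [hde, fEdge_eq R d.adj]
    have e1 : (⟨(d.fst, d.snd), d.adj⟩ : G.Dart) = d := by
      apply SimpleGraph.Dart.ext; rfl
    have e2 : (⟨(d.snd, d.fst), d.adj.symm⟩ : G.Dart) = d.symm := by
      apply SimpleGraph.Dart.ext; rfl
    rw [e1, e2]
  have g1 : 4 ≤ R.faceLen d := by
    have := R.three_le_faceLen hdeg d
    omega
  have g2 : 4 ≤ R.faceLen d.symm := by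
    have := R.three_le_faceLen hdeg d.symm
    omega
  have b1 := one_div_cast_le4 g1
  have b2 := one_div_cast_le4 g2
  rw [hfe]
  push_cast
  linarith

lemma main_case_K3 (hdeg : ∀ v : V, 3 ≤ G.degree v) (hC5 : G.CycleFree 5) {d : G.Dart}
    (h3 : R.faceLen d = 3)
    (ho1 : R.faceLen d.symm ≠ 3) (ho2 : R.faceLen (R.facePerm d).symm ≠ 3)
    (ho3 : R.faceLen (R.facePerm (R.facePerm d)).symm ≠ 3) :
    15 * (∑ x ∈ (R.triBlockOf d.edge).toFinite.toFinset, R.fEdge x)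
      - 8 * ((R.triBlockOf d.edge).ncard : ℚ) ≤ 0 := by
  obtain ⟨u, v, w, huv, hvw, hwu, nuv, nvw, nuw, hd, hfd, hffd, ht3b, hface⟩ :=
    R.triangle_structure hdeg h3
  have hde : d.edge = s(u, v) := by rw [hd]; rfl
  have hfde : (R.facePerm d).edge = s(v, w) := by rw [hfd]; rfl
  have hffde : (R.facePerm (R.facePerm d)).edge = s(w, u) := by rw [hffd]; rfl
  have hsc2 : R.facePerm.SameCycle d (R.facePerm d) := R.sameCycle_facePerm d
  have hsc3 : R.facePerm.SameCycle d (R.facePerm (R.facePerm d)) :=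
    hsc2.trans (R.sameCycle_facePerm _)
  have hl2 : R.faceLen (R.facePerm d) = 3 := by rw [← R.faceLen_congr hsc2, h3]
  have hl3 : R.faceLen (R.facePerm (R.facePerm d)) = 3 := by rw [← R.faceLen_congr hsc3, h3]
  have ne12 : s(u, v) ≠ s(v, w) := by
    rw [Ne, Sym2.eq_iff]
    rintro (⟨h1, h2⟩ | ⟨h1, h2⟩)
    exacts [nuv h1, nuw h1]
  have ne13 : s(u, v) ≠ s(w, u) := by
    rw [Ne, Sym2.eq_iff]
    rintro (⟨h1, h2⟩ | ⟨h1, h2⟩)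
    exacts [nuw h1, nvw h2]
  have ne23 : s(v, w) ≠ s(w, u) := by
    rw [Ne, Sym2.eq_iff]
    rintro (⟨h1, h2⟩ | ⟨h1, h2⟩)
    exacts [nvw h1, nuv h1.symm]
  have hB : R.triBlockOf d.edge = {s(u, v), s(v, w), s(w, u)} := by
    apply Set.Subset.antisymm
    · apply R.triBlock_subset (by rw [hde]; exact Set.mem_insert _ _)
      rintro a ha b ⟨d1, d2, hd1e, hd2e, hl1, hsc⟩
      have hd1 : d1 = d ∨ d1 = R.facePerm d ∨ d1 = R.facePerm (R.facePerm d) := by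
        rcases ha with rfl | rfl | rfl
        · rw [← hde] at hd1e
          rcases (SimpleGraph.dart_edge_eq_iff d1 d).1 hd1e with rfl | rfl
          · exact Or.inl rfl
          · exact absurd hl1 ho1
        · rw [← hfde] at hd1e
          rcases (SimpleGraph.dart_edge_eq_iff d1 _).1 hd1e with rfl | rfl
          · exact Or.inr (Or.inl rfl)
          · exact absurd hl1 ho2
        · rw [← hffde] at hd1e
          rcases (SimpleGraph.dart_edge_eq_iff d1 _).1 hd1e with rfl | rfl
          · exact Or.inr (Or.inr rfl)
          · exact absurd hl1 ho3
      have hsc0 : R.facePerm.SameCycle d d2 := by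
        rcases hd1 with rfl | h | h
        · exact hsc
        · rw [h] at hsc; exact hsc2.trans hsc
        · rw [h] at hsc; exact hsc3.trans hsc
      have hmem : d2 ∈ R.faceOf d := hsc0
      rw [hface] at hmem
      rcases hmem with rfl | rfl | rfl
      · rw [← hd2e, hde]
        exact Set.mem_insert _ _
      · rw [← hd2e]
        have : (⟨(v, w), hvw⟩ : G.Dart).edge = s(v, w) := rfl
        rw [this]
        exact Set.mem_insert_of_mem _ (Set.mem_insert _ _)
      · rw [← hd2e]
        have : (⟨(w, u), hwu⟩ : G.Dart).edge = s(w, u) := rfl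
        rw [this]
        exact Set.mem_insert_of_mem _ (Set.mem_insert_of_mem _ rfl)
    · rintro x (rfl | rfl | rfl)
      · exact hde ▸ Relation.ReflTransGen.refl
      · exact Relation.ReflTransGen.single ⟨d, R.facePerm d, hde ▸ rfl, hfde, h3, hsc2⟩
      · exact Relation.ReflTransGen.single ⟨d, _, hde ▸ rfl, hffde, h3, hsc3⟩
  have hBF : (R.triBlockOf d.edge).toFinite.toFinset =
      ({s(u, v), s(v, w), s(w, u)} : Finset (Sym2 V)) := by
    ext x
    rw [Set.Finite.mem_toFinset, hB]
    simp
  have hcard : (R.triBlockOf d.edge).ncard = 3 := by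
    rw [hB, Set.ncard_insert_of_notMem (by simp [ne12, ne13]) (Set.toFinite _),
      Set.ncard_insert_of_notMem (by simp [ne23]) (Set.toFinite _), Set.ncard_singleton]
  have hE1 : R.fEdge s(u, v) = 1 / 3 + 1 / (R.faceLen d.symm : ℚ) := by
    rw [fEdge_eq R huv]
    have e1 : (⟨(u, v), huv⟩ : G.Dart) = d := hd.symm
    have e2 : (⟨(v, u), huv.symm⟩ : G.Dart) = d.symm := by
      rw [hd]; apply SimpleGraph.Dart.ext; rfl
    rw [e1, e2, h3]
    norm_num
  have hE2 : R.fEdge s(v, w) = 1 / 3 + 1 / (R.faceLen (R.facePerm d).symm : ℚ) := by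
    rw [fEdge_eq R hvw]
    have e1 : (⟨(v, w), hvw⟩ : G.Dart) = R.facePerm d := hfd.symm
    have e2 : (⟨(w, v), hvw.symm⟩ : G.Dart) = (R.facePerm d).symm := by
      rw [hfd]; apply SimpleGraph.Dart.ext; rfl
    rw [e1, e2, hl2]
    norm_num
  have hE3 : R.fEdge s(w, u) = 1 / 3 + 1 / (R.faceLen (R.facePerm (R.facePerm d)).symm : ℚ) := by
    rw [fEdge_eq R hwu]
    have e1 : (⟨(w, u), hwu⟩ : G.Dart) = R.facePerm (R.facePerm d) := hffd.symm
    have e2 : (⟨(u, w), hwu.symm⟩ : G.Dart) = (R.facePerm (R.facePerm d)).symm := by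
      rw [hffd]; apply SimpleGraph.Dart.ext; rfl
    rw [e1, e2, hl3]
    norm_num
  have b1 := one_div_cast_le6 (R.six_le_faceLen_symm hdeg hC5 h3 ho1)
  have b2 := one_div_cast_le6 (R.six_le_faceLen_symm hdeg hC5 hl2 ho2)
  have b3 := one_div_cast_le6 (R.six_le_faceLen_symm hdeg hC5 hl3 ho3)
  rw [hBF, hcard, Finset.sum_insert (by simp [ne12, ne13]),
    Finset.sum_insert (by simp [ne23]), Finset.sum_singleton, hE1, hE2, hE3]
  push_cast
  linarith

end RotationSystem
end PlanarTuran
namespace PlanarTuran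
namespace RotationSystem

set_option linter.unusedSectionVars false
set_option maxHeartbeats 2000000

variable {V : Type*} [Fintype V] [DecidableEq V] {G : SimpleGraph V} [DecidableRel G.Adj]
variable (R : RotationSystem G)

lemma main_case_B4 (hdeg : ∀ v : V, 3 ≤ G.degree v) (hK4 : G.CliqueFree 4)
    (hC5 : G.CycleFree 5) {d : G.Dart} (h3 : R.faceLen d = 3) (hs3 : R.faceLen d.symm = 3) :
    15 * (∑ x ∈ (R.triBlockOf d.edge).toFinite.toFinset, R.fEdge x)
      - 8 * ((R.triBlockOf d.edge).ncard : ℚ) ≤ 0 := by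
  obtain ⟨u, v, w, huv, hvw, hwu, nuv, nvw, nuw, hd, hfd, hffd, ht3b, hface⟩ :=
    R.triangle_structure hdeg h3
  obtain ⟨p0, q0, x, hpq, hqr, hrp, npq, nqr, npr, hds, hfds, hffds, hts3b, hfaces⟩ :=
    R.triangle_structure hdeg hs3
  have hds0 : d.symm = ⟨(v, u), huv.symm⟩ := by
    rw [hd]; apply SimpleGraph.Dart.ext; rfl
  have hp0 : v = p0 := congrArg (fun z : G.Dart => z.fst) (hds0.symm.trans hds)
  have hq0 : u = q0 := congrArg (fun z : G.Dart => z.snd) (hds0.symm.trans hds)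
  subst hp0
  subst hq0
  -- now hqr : G.Adj u x, hrp : G.Adj x v, nqr : u ≠ x, npr : v ≠ x
  have nxw : x ≠ w := by
    intro hxw
    subst hxw
    have h1 := ht3b
    rw [hd] at h1
    have h2 := hfds
    rw [hds0] at h2
    exact R.corner_absurd hdeg (p := u) (x := x) (y := v) hwu.symm huv h1 h2
  -- edges
  have hde : d.edge = s(u, v) := by rw [hd]; rfl
  have hfde : (R.facePerm d).edge = s(v, w) := by rw [hfd]; rfl
  have hffde : (R.facePerm (R.facePerm d)).edge = s(w, u) := by rw [hffd]; rfl
  have hfdse : (R.facePerm d.symm).edge = s(u, x) := by rw [hfds]; rfl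
  have hffdse : (R.facePerm (R.facePerm d.symm)).edge = s(x, v) := by rw [hffds]; rfl
  have hsc2 : R.facePerm.SameCycle d (R.facePerm d) := R.sameCycle_facePerm d
  have hsc3 : R.facePerm.SameCycle d (R.facePerm (R.facePerm d)) :=
    hsc2.trans (R.sameCycle_facePerm _)
  have hscs2 : R.facePerm.SameCycle d.symm (R.facePerm d.symm) := R.sameCycle_facePerm d.symm
  have hscs3 : R.facePerm.SameCycle d.symm (R.facePerm (R.facePerm d.symm)) :=
    hscs2.trans (R.sameCycle_facePerm _)
  have hl2 : R.faceLen (R.facePerm d) = 3 := by rw [← R.faceLen_congr hsc2, h3]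
  have hl3 : R.faceLen (R.facePerm (R.facePerm d)) = 3 := by rw [← R.faceLen_congr hsc3, h3]
  have hls2 : R.faceLen (R.facePerm d.symm) = 3 := by rw [← R.faceLen_congr hscs2, hs3]
  have hls3 : R.faceLen (R.facePerm (R.facePerm d.symm)) = 3 := by
    rw [← R.faceLen_congr hscs3, hs3]
  -- edge disequalities
  have ne12 : s(u, v) ≠ s(v, w) := by
    rw [Ne, Sym2.eq_iff]; rintro (⟨h1, h2⟩ | ⟨h1, h2⟩); exacts [nuv h1, nuw h1]
  have ne13 : s(u, v) ≠ s(w, u) := by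
    rw [Ne, Sym2.eq_iff]; rintro (⟨h1, h2⟩ | ⟨h1, h2⟩); exacts [nuw h1, nvw h2]
  have ne23 : s(v, w) ≠ s(w, u) := by
    rw [Ne, Sym2.eq_iff]; rintro (⟨h1, h2⟩ | ⟨h1, h2⟩); exacts [nvw h1, nuv h1.symm]
  have ne14 : s(u, v) ≠ s(u, x) := by
    rw [Ne, Sym2.eq_iff]; rintro (⟨h1, h2⟩ | ⟨h1, h2⟩); exacts [npr h2, nqr h1]
  have ne15 : s(u, v) ≠ s(x, v) := by
    rw [Ne, Sym2.eq_iff]; rintro (⟨h1, h2⟩ | ⟨h1, h2⟩); exacts [nqr h1, nuv h1]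
  have ne24 : s(v, w) ≠ s(u, x) := by
    rw [Ne, Sym2.eq_iff]; rintro (⟨h1, h2⟩ | ⟨h1, h2⟩); exacts [nuv h1.symm, npr h1]
  have ne25 : s(v, w) ≠ s(x, v) := by
    rw [Ne, Sym2.eq_iff]; rintro (⟨h1, h2⟩ | ⟨h1, h2⟩); exacts [npr h1, nxw h2.symm]
  have ne34 : s(w, u) ≠ s(u, x) := by
    rw [Ne, Sym2.eq_iff]; rintro (⟨h1, h2⟩ | ⟨h1, h2⟩); exacts [nuw h1.symm, nxw h1.symm]
  have ne35 : s(w, u) ≠ s(x, v) := by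
    rw [Ne, Sym2.eq_iff]; rintro (⟨h1, h2⟩ | ⟨h1, h2⟩); exacts [nxw h1.symm, nqr h2]
  have ne45 : s(u, x) ≠ s(x, v) := by
    rw [Ne, Sym2.eq_iff]; rintro (⟨h1, h2⟩ | ⟨h1, h2⟩); exacts [nqr h1, nuv h1]
  -- outer darts have no 3-face
  have nO2 : R.faceLen (R.facePerm d).symm ≠ 3 := by
    intro hO
    have hsymm : (R.facePerm d).symm = ⟨(w, v), hvw.symm⟩ := by
      rw [hfd]; apply SimpleGraph.Dart.ext; rfl
    rw [hsymm] at hO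
    obtain ⟨p, q, y, hpq', hqy, hyp, npq', nqy, npy, hdO, hfO, hffO, htOb, hfaceO⟩ :=
      R.triangle_structure hdeg hO
    have hp : w = p := congrArg (fun z : G.Dart => z.fst) hdO
    have hq : v = q := congrArg (fun z : G.Dart => z.snd) hdO
    subst hp
    subst hq
    rcases eq_or_ne y u with rfl | hyu
    · have h1 : R.facePerm (⟨(w, v), hvw.symm⟩ : G.Dart) = d.symm := by
        rw [hfO]; exact hds0.symm
      have hmem : (⟨(w, v), hvw.symm⟩ : G.Dart) ∈ R.faceOf d.symm :=
        (Equiv.Perm.SameCycle.symm ⟨1, by simpa using h1⟩ : _)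
      rw [hfaces] at hmem
      rcases hmem with h | h | h
      · rw [hds0] at h
        exact nvw (congrArg (fun z : G.Dart => z.fst) h).symm
      · exact nuw (congrArg (fun z : G.Dart => z.fst) h).symm
      · exact nxw (congrArg (fun z : G.Dart => z.fst) h).symm
    · rcases eq_or_ne y x with rfl | hyx
      · exact no_k4 hK4 huv hwu.symm hqr hvw hrp.symm hyp.symm
      · exact no_c5 hC5 hyp hwu hqr hrp hqy hyu hyx (Ne.symm nxw) (Ne.symm nvw) nuv
  have nO3 : R.faceLen (R.facePerm (R.facePerm d)).symm ≠ 3 := by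
    intro hO
    have hsymm : (R.facePerm (R.facePerm d)).symm = ⟨(u, w), hwu.symm⟩ := by
      rw [hffd]; apply SimpleGraph.Dart.ext; rfl
    rw [hsymm] at hO
    obtain ⟨p, q, y, hpq', hqy, hyp, npq', nqy, npy, hdO, hfO, hffO, htOb, hfaceO⟩ :=
      R.triangle_structure hdeg hO
    have hp : u = p := congrArg (fun z : G.Dart => z.fst) hdO
    have hq : w = q := congrArg (fun z : G.Dart => z.snd) hdO
    subst hp
    subst hq
    rcases eq_or_ne y v with rfl | hyv
    · have h2' : R.facePerm (R.facePerm (⟨(u, w), hwu.symm⟩ : G.Dart)) = d.symm := by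
        rw [hffO]; exact hds0.symm
      have hmem : (⟨(u, w), hwu.symm⟩ : G.Dart) ∈ R.faceOf d.symm :=
        (Equiv.Perm.SameCycle.symm ⟨2, by rw [zpow_two, Equiv.Perm.mul_apply]; exact h2'⟩ : _)
      rw [hfaces] at hmem
      rcases hmem with h | h | h
      · rw [hds0] at h
        exact nuv (congrArg (fun z : G.Dart => z.fst) h)
      · exact nxw ((congrArg (fun z : G.Dart => z.snd) h)).symm
      · exact nqr (congrArg (fun z : G.Dart => z.fst) h)
    · rcases eq_or_ne y x with rfl | hyx
      · exact no_k4 hK4 huv hwu.symm hqr hvw hrp.symm hqy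
      · exact no_c5 hC5 hyp hqr hrp hvw hqy hyx hyv nuv nuw nxw
  have nO4 : R.faceLen (R.facePerm d.symm).symm ≠ 3 := by
    intro hO
    have hsymm : (R.facePerm d.symm).symm = ⟨(x, u), hqr.symm⟩ := by
      rw [hfds]; apply SimpleGraph.Dart.ext; rfl
    rw [hsymm] at hO
    obtain ⟨p, q, y, hpq', hqy, hyp, npq', nqy, npy, hdO, hfO, hffO, htOb, hfaceO⟩ :=
      R.triangle_structure hdeg hO
    have hp : x = p := congrArg (fun z : G.Dart => z.fst) hdO
    have hq : u = q := congrArg (fun z : G.Dart => z.snd) hdO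
    subst hp
    subst hq
    rcases eq_or_ne y v with rfl | hyv
    · have h1 : R.facePerm (⟨(x, u), hqr.symm⟩ : G.Dart) = d := by
        rw [hfO]; exact hd.symm
      have hmem : (⟨(x, u), hqr.symm⟩ : G.Dart) ∈ R.faceOf d :=
        (Equiv.Perm.SameCycle.symm ⟨1, by simpa using h1⟩ : _)
      rw [hface] at hmem
      rcases hmem with h | h | h
      · rw [hd] at h
        exact nqr (congrArg (fun z : G.Dart => z.fst) h).symm
      · exact npr (congrArg (fun z : G.Dart => z.fst) h).symm
      · exact nxw (congrArg (fun z : G.Dart => z.fst) h)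
    · rcases eq_or_ne y w with rfl | hyw
      · exact no_k4 hK4 huv hwu.symm hqr hvw hrp.symm hyp
      · exact no_c5 hC5 hyp hrp hvw hwu hqy hyv hyw nxw (Ne.symm nqr) (Ne.symm nuv)
  have nO5 : R.faceLen (R.facePerm (R.facePerm d.symm)).symm ≠ 3 := by
    intro hO
    have hsymm : (R.facePerm (R.facePerm d.symm)).symm = ⟨(v, x), hrp.symm⟩ := by
      rw [hffds]; apply SimpleGraph.Dart.ext; rfl
    rw [hsymm] at hO
    obtain ⟨p, q, y, hpq', hqy, hyp, npq', nqy, npy, hdO, hfO, hffO, htOb, hfaceO⟩ :=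
      R.triangle_structure hdeg hO
    have hp : v = p := congrArg (fun z : G.Dart => z.fst) hdO
    have hq : x = q := congrArg (fun z : G.Dart => z.snd) hdO
    subst hp
    subst hq
    rcases eq_or_ne y u with rfl | hyu
    · have h2' : R.facePerm (R.facePerm (⟨(v, x), hrp.symm⟩ : G.Dart)) = d := by
        rw [hffO]; exact hd.symm
      have hmem : (⟨(v, x), hrp.symm⟩ : G.Dart) ∈ R.faceOf d :=
        (Equiv.Perm.SameCycle.symm ⟨2, by rw [zpow_two, Equiv.Perm.mul_apply]; exact h2'⟩ : _)
      rw [hface] at hmem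
      rcases hmem with h | h | h
      · rw [hd] at h
        exact nuv (congrArg (fun z : G.Dart => z.fst) h).symm
      · exact nxw (congrArg (fun z : G.Dart => z.snd) h)
      · exact nvw (congrArg (fun z : G.Dart => z.fst) h)
    · rcases eq_or_ne y w with rfl | hyw
      · exact no_k4 hK4 huv hwu.symm hqr hvw hrp.symm hqy.symm
      · exact no_c5 hC5 hqy hyp hvw hwu hqr (Ne.symm npr) nxw hyw hyu (Ne.symm nuv)
  -- the block
  have hB : R.triBlockOf d.edge = {s(u, v), s(v, w), s(w, u), s(u, x), s(x, v)} := by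
    apply Set.Subset.antisymm
    · apply R.triBlock_subset (by rw [hde]; exact Set.mem_insert _ _)
      rintro a ha b ⟨d1, d2, hd1e, hd2e, hl1, hsc⟩
      have hd2mem : d2 ∈ R.faceOf d ∨ d2 ∈ R.faceOf d.symm := by
        rcases ha with rfl | rfl | rfl | rfl | rfl
        · rw [← hde] at hd1e
          rcases (SimpleGraph.dart_edge_eq_iff d1 d).1 hd1e with rfl | rfl
          · exact Or.inl hsc
          · exact Or.inr hsc
        · rw [← hfde] at hd1e
          rcases (SimpleGraph.dart_edge_eq_iff d1 _).1 hd1e with rfl | rfl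
          · exact Or.inl (hsc2.trans hsc)
          · exact absurd hl1 nO2
        · rw [← hffde] at hd1e
          rcases (SimpleGraph.dart_edge_eq_iff d1 _).1 hd1e with rfl | rfl
          · exact Or.inl (hsc3.trans hsc)
          · exact absurd hl1 nO3
        · rw [← hfdse] at hd1e
          rcases (SimpleGraph.dart_edge_eq_iff d1 _).1 hd1e with rfl | rfl
          · exact Or.inr (hscs2.trans hsc)
          · exact absurd hl1 nO4
        · rw [← hffdse] at hd1e
          rcases (SimpleGraph.dart_edge_eq_iff d1 _).1 hd1e with rfl | rfl
          · exact Or.inr (hscs3.trans hsc)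
          · exact absurd hl1 nO5
      rcases hd2mem with hm | hm
      · rw [hface] at hm
        rcases hm with rfl | rfl | rfl
        · rw [← hd2e, hde]
          exact Set.mem_insert _ _
        · rw [← hd2e]
          show s(v, w) ∈ _
          simp
        · rw [← hd2e]
          show s(w, u) ∈ _
          simp
      · rw [hfaces] at hm
        rcases hm with rfl | rfl | rfl
        · rw [← hd2e, SimpleGraph.Dart.edge_symm, hde]
          exact Set.mem_insert _ _
        · rw [← hd2e]
          show s(u, x) ∈ _
          simp
        · rw [← hd2e]
          show s(x, v) ∈ _
          simp
    · rintro b (rfl | rfl | rfl | rfl | rfl)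
      · exact hde ▸ Relation.ReflTransGen.refl
      · exact Relation.ReflTransGen.single ⟨d, _, hde ▸ rfl, hfde, h3, hsc2⟩
      · exact Relation.ReflTransGen.single ⟨d, _, hde ▸ rfl, hffde, h3, hsc3⟩
      · exact Relation.ReflTransGen.single
          ⟨d.symm, _, hde ▸ (SimpleGraph.Dart.edge_symm d), hfdse, hs3, hscs2⟩
      · exact Relation.ReflTransGen.single
          ⟨d.symm, _, hde ▸ (SimpleGraph.Dart.edge_symm d), hffdse, hs3, hscs3⟩
  have hBF : (R.triBlockOf d.edge).toFinite.toFinset =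
      ({s(u, v), s(v, w), s(w, u), s(u, x), s(x, v)} : Finset (Sym2 V)) := by
    ext z
    rw [Set.Finite.mem_toFinset, hB]
    simp
  have hcard : (R.triBlockOf d.edge).ncard = 5 := by
    rw [hB, Set.ncard_insert_of_notMem (by simp [ne12, ne13, ne14, ne15]) (Set.toFinite _),
      Set.ncard_insert_of_notMem (by simp [ne23, ne24, ne25]) (Set.toFinite _),
      Set.ncard_insert_of_notMem (by simp [ne34, ne35]) (Set.toFinite _),
      Set.ncard_insert_of_notMem (by simp [ne45]) (Set.toFinite _), Set.ncard_singleton]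
  -- edge contributions
  have hE1 : R.fEdge s(u, v) = 1 / 3 + 1 / 3 := by
    rw [fEdge_eq R huv]
    have e1 : (⟨(u, v), huv⟩ : G.Dart) = d := hd.symm
    have e2 : (⟨(v, u), huv.symm⟩ : G.Dart) = d.symm := hds0.symm
    rw [e1, e2, h3, hs3]
    norm_num
  have hE2 : R.fEdge s(v, w) = 1 / 3 + 1 / (R.faceLen (R.facePerm d).symm : ℚ) := by
    rw [fEdge_eq R hvw]
    have e1 : (⟨(v, w), hvw⟩ : G.Dart) = R.facePerm d := hfd.symm
    have e2 : (⟨(w, v), hvw.symm⟩ : G.Dart) = (R.facePerm d).symm := by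
      rw [hfd]; apply SimpleGraph.Dart.ext; rfl
    rw [e1, e2, hl2]
    norm_num
  have hE3 : R.fEdge s(w, u) = 1 / 3 + 1 / (R.faceLen (R.facePerm (R.facePerm d)).symm : ℚ) := by
    rw [fEdge_eq R hwu]
    have e1 : (⟨(w, u), hwu⟩ : G.Dart) = R.facePerm (R.facePerm d) := hffd.symm
    have e2 : (⟨(u, w), hwu.symm⟩ : G.Dart) = (R.facePerm (R.facePerm d)).symm := by
      rw [hffd]; apply SimpleGraph.Dart.ext; rfl
    rw [e1, e2, hl3]
    norm_num
  have hE4 : R.fEdge s(u, x) = 1 / 3 + 1 / (R.faceLen (R.facePerm d.symm).symm : ℚ) := by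
    rw [fEdge_eq R hqr]
    have e1 : (⟨(u, x), hqr⟩ : G.Dart) = R.facePerm d.symm := hfds.symm
    have e2 : (⟨(x, u), hqr.symm⟩ : G.Dart) = (R.facePerm d.symm).symm := by
      rw [hfds]; apply SimpleGraph.Dart.ext; rfl
    rw [e1, e2, hls2]
    norm_num
  have hE5 : R.fEdge s(x, v) =
      1 / 3 + 1 / (R.faceLen (R.facePerm (R.facePerm d.symm)).symm : ℚ) := by
    rw [fEdge_eq R hrp]
    have e1 : (⟨(x, v), hrp⟩ : G.Dart) = R.facePerm (R.facePerm d.symm) := hffds.symm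
    have e2 : (⟨(v, x), hrp.symm⟩ : G.Dart) = (R.facePerm (R.facePerm d.symm)).symm := by
      rw [hffds]; apply SimpleGraph.Dart.ext; rfl
    rw [e1, e2, hls3]
    norm_num
  have b2 := one_div_cast_le6 (R.six_le_faceLen_symm hdeg hC5 hl2 nO2)
  have b3 := one_div_cast_le6 (R.six_le_faceLen_symm hdeg hC5 hl3 nO3)
  have b4 := one_div_cast_le6 (R.six_le_faceLen_symm hdeg hC5 hls2 nO4)
  have b5 := one_div_cast_le6 (R.six_le_faceLen_symm hdeg hC5 hls3 nO5)
  rw [hBF, hcard, Finset.sum_insert (by simp [ne12, ne13, ne14, ne15]),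
    Finset.sum_insert (by simp [ne23, ne24, ne25]),
    Finset.sum_insert (by simp [ne34, ne35]),
    Finset.sum_insert (by simp [ne45]), Finset.sum_singleton, hE1, hE2, hE3, hE4, hE5]
  push_cast
  linarith

lemma main_case_tri (hdeg : ∀ v : V, 3 ≤ G.degree v) (hK4 : G.CliqueFree 4)
    (hC5 : G.CycleFree 5) {d : G.Dart} (h3 : R.faceLen d = 3) :
    15 * (∑ x ∈ (R.triBlockOf d.edge).toFinite.toFinset, R.fEdge x)
      - 8 * ((R.triBlockOf d.edge).ncard : ℚ) ≤ 0 := by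
  by_cases hb1 : R.faceLen d.symm = 3
  · exact R.main_case_B4 hdeg hK4 hC5 h3 hb1
  by_cases hb2 : R.faceLen (R.facePerm d).symm = 3
  · have hsh : R.shares3Face d.edge (R.facePerm d).edge :=
      ⟨d, _, rfl, rfl, h3, R.sameCycle_facePerm d⟩
    rw [R.triBlockOf_eq_of_shares hsh]
    exact R.main_case_B4 hdeg hK4 hC5
      (by rw [← R.faceLen_congr (R.sameCycle_facePerm d)]; exact h3) hb2
  by_cases hb3 : R.faceLen (R.facePerm (R.facePerm d)).symm = 3
  · have hsc3 : R.facePerm.SameCycle d (R.facePerm (R.facePerm d)) :=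
      (R.sameCycle_facePerm d).trans (R.sameCycle_facePerm _)
    have hsh : R.shares3Face d.edge (R.facePerm (R.facePerm d)).edge :=
      ⟨d, _, rfl, rfl, h3, hsc3⟩
    rw [R.triBlockOf_eq_of_shares hsh]
    exact R.main_case_B4 hdeg hK4 hC5 (by rw [← R.faceLen_congr hsc3]; exact h3) hb3
  · exact R.main_case_K3 hdeg hC5 h3 hb1 hb2 hb3

end RotationSystem
end PlanarTuran

/-- In a plane graph with no `K₄` and no `C₅`, minimum degree at least `3`
and at least `5` vertices, every triangular block `B` satisfies `15 f(B) - 8 e(B) ≤ 0`. -/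
theorem triangularBlock_discharging_K4_C5_free {V : Type*} [Fintype V] [DecidableEq V]
    (G : SimpleGraph V) [DecidableRel G.Adj]
    (R : PlanarTuran.RotationSystem G) (hplane : R.GenusZero)
    (hK4 : G.CliqueFree 4) (hC5 : G.CycleFree 5)
    (hdeg : ∀ v : V, 3 ≤ G.degree v) (hn5 : 5 ≤ Fintype.card V) :
    ∀ B : Set (Sym2 V), R.IsTriangularBlock B →
      15 * (∑ e ∈ B.toFinite.toFinset, R.fEdge e) - 8 * (B.ncard : ℚ) ≤ 0 := by
  intro B hB
  obtain ⟨e, he, hBe⟩ := hB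
  subst hBe
  revert he
  refine Sym2.ind (fun a b => ?_) e
  intro he
  have hab : G.Adj a b := by rwa [SimpleGraph.mem_edgeSet] at he
  have hedge : s(a, b) = (⟨(a, b), hab⟩ : G.Dart).edge := rfl
  rw [hedge]
  by_cases h1 : R.faceLen (⟨(a, b), hab⟩ : G.Dart) = 3
  · exact R.main_case_tri hdeg hK4 hC5 h1
  · by_cases h2 : R.faceLen (⟨(a, b), hab⟩ : G.Dart).symm = 3
    · have h := R.main_case_tri hdeg hK4 hC5 h2
      rwa [SimpleGraph.Dart.edge_symm] at h
    · exact R.main_case_K2 hdeg h1 h2
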